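/- Let ℓ be an odd prime. Then the quaternion algebra ℍ[ℚ_ℓ, −1, −1] splits: there exists an isomorphism of ℚ_ℓ-algebras ℍ[ℚ_ℓ, −1, −1] ≅ M₂(ℚ_ℓ). (That is, the Hamilton quaternion ℚ-algebra Q(−1, −1 | ℚ) is unramified at every odd prime.) -/

import Mathlib

open Quaternion Polynomial


lemma padic_exists_sq_add_sq_aux (ℓ : ℕ) [Fact ℓ.Prime] (hℓ : Odd ℓ)
    (a b : ZMod ℓ) (ha : a ≠ 0) (hab : a ^ 2 + b ^ 2 = -1) :
    ∃ x y : ℚ_[ℓ], x ^ 2 + y ^ 2 = -1 := by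
  set A : ℤ_[ℓ] := (a.val : ℤ_[ℓ]) with hA
  set B : ℤ_[ℓ] := (b.val : ℤ_[ℓ]) with hB
  have hmapA : PadicInt.toZMod A = a := by
    simp [hA, ZMod.natCast_val, ZMod.cast_id]
  have hmapB : PadicInt.toZMod B = b := by
    simp [hB, ZMod.natCast_val, ZMod.cast_id]
  set F : Polynomial ℤ_[ℓ] := X ^ 2 + C (B ^ 2 + 1) with hF
  have hevalF : F.eval A = A ^ 2 + B ^ 2 + 1 := by simp [hF]; ring
  have hderiv : F.derivative.eval A = 2 * A := by
    simp [hF, derivative_pow]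
  have hltone (z : ℤ_[ℓ]) (hz : PadicInt.toZMod z = 0) : ‖z‖ < 1 := by
    rw [PadicInt.norm_lt_one_iff_dvd]
    have := PadicInt.ker_toZMod (p := ℓ)
    have hmem : z ∈ RingHom.ker (PadicInt.toZMod : ℤ_[ℓ] →+* ZMod ℓ) := hz
    rw [this, PadicInt.maximalIdeal_eq_span_p, Ideal.mem_span_singleton] at hmem
    exact hmem
  have h2 : (2 : ZMod ℓ) ≠ 0 := by
    intro h
    have : (ℓ : ℕ) ∣ 2 := by
      have := (ZMod.natCast_eq_zero_iff 2 ℓ).mp (by exact_mod_cast h)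
      exact this
    have hp := (Fact.out : ℓ.Prime)
    have : ℓ = 2 := (Nat.prime_dvd_prime_iff_eq hp Nat.prime_two).mp this
    rw [this] at hℓ
    exact (Nat.not_odd_iff_even.mpr (even_iff_two_dvd.mpr ⟨1, rfl⟩)) hℓ
  have hdnorm : ‖F.derivative.eval A‖ = 1 := by
    rw [hderiv]
    by_contra h
    have hle := PadicInt.norm_le_one (2 * A)
    have hlt : ‖(2 * A : ℤ_[ℓ])‖ < 1 := lt_of_le_of_ne hle h
    rw [PadicInt.norm_lt_one_iff_dvd] at hlt
    have : PadicInt.toZMod (2 * A : ℤ_[ℓ]) = 0 := by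
      obtain ⟨c, hc⟩ := hlt
      simp [hc, map_mul]
    rw [map_mul, hmapA, map_ofNat] at this
    rcases mul_eq_zero.mp this with h' | h'
    · exact h2 h'
    · exact ha h'
  have hnorm : ‖F.eval A‖ < ‖F.derivative.eval A‖ ^ 2 := by
    rw [hdnorm, one_pow, hevalF]
    apply hltone
    simp [map_add, map_pow, hmapA, hmapB]
    linear_combination hab
  obtain ⟨z, hz, -⟩ := hensels_lemma hnorm
  rw [hF] at hz
  simp at hz
  refine ⟨(z : ℚ_[ℓ]), (B : ℚ_[ℓ]), ?_⟩
  have : ((z ^ 2 + (B ^ 2 + 1) : ℤ_[ℓ]) : ℚ_[ℓ]) = 0 := by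
    rw [show z ^ 2 + (B ^ 2 + 1) = 0 from by linear_combination hz]; simp
  push_cast at this
  linear_combination this



lemma split_of_sum_sq {K : Type*} [Field K] [CharZero K] (x y : K) (hxy : x ^ 2 + y ^ 2 = -1) :
    Nonempty (ℍ[K, -1, -1] ≃ₐ[K] Matrix (Fin 2) (Fin 2) K) := by
  let q : QuaternionAlgebra.Basis (R := K) (Matrix (Fin 2) (Fin 2) K) (-1) 0 (-1) :=
    { i := !![x, y; y, -x]
      j := !![0, 1; -1, 0]
      k := !![-y, x; x, y]
      i_mul_i := by
        ext i j
        fin_cases i <;> fin_cases j <;>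
          simp [Matrix.mul_apply, Fin.sum_univ_two, Matrix.one_apply, mul_comm]
        all_goals linear_combination hxy
      j_mul_j := by
        ext i j
        fin_cases i <;> fin_cases j <;>
          simp [Matrix.mul_apply, Fin.sum_univ_two, Matrix.one_apply]
      i_mul_j := by
        ext i j
        fin_cases i <;> fin_cases j <;>
          simp [Matrix.mul_apply, Fin.sum_univ_two]
      j_mul_i := by
        ext i j
        fin_cases i <;> fin_cases j <;>
          simp [Matrix.mul_apply, Fin.sum_univ_two] }
  let φ : ℍ[K, -1, -1] →ₐ[K] Matrix (Fin 2) (Fin 2) K := q.liftHom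
  have hinj : Function.Injective φ := by
    rw [injective_iff_map_eq_zero]
    intro u hu
    have h00 := congrFun (congrFun hu 0) 0
    have h01 := congrFun (congrFun hu 0) 1
    have h10 := congrFun (congrFun hu 1) 0
    have h11 := congrFun (congrFun hu 1) 1
    simp [φ, q, QuaternionAlgebra.Basis.liftHom_apply, QuaternionAlgebra.Basis.lift,
      Matrix.algebraMap_matrix_apply, Matrix.add_apply, Matrix.smul_apply,
      smul_eq_mul] at h00 h01 h10 h11
    have h2 : (2 : K) ≠ 0 := two_ne_zero
    ext
    · show u.re = 0
      have : u.re * 2 = 0 := by linear_combination h00 + h11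
      exact (mul_eq_zero.mp this).resolve_right h2
    · show u.imI = 0
      have : u.imI * 2 = 0 := by
        linear_combination -x * h00 + x * h11 - y * h01 - y * h10 + 2 * u.imI * hxy
      exact (mul_eq_zero.mp this).resolve_right h2
    · show u.imJ = 0
      have : u.imJ * 2 = 0 := by linear_combination h01 - h10
      exact (mul_eq_zero.mp this).resolve_right h2
    · show u.imK = 0
      have : u.imK * 2 = 0 := by
        linear_combination y * h00 - y * h11 - x * h01 - x * h10 + 2 * u.imK * hxy
      exact (mul_eq_zero.mp this).resolve_right h2
  have hfr : Module.finrank K ℍ[K, -1, -1] = Module.finrank K (Matrix (Fin 2) (Fin 2) K) := by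
    rw [QuaternionAlgebra.finrank_eq_four, Module.finrank_matrix]
    simp
  have hsurj : Function.Surjective φ :=
    (LinearMap.injective_iff_surjective_of_finrank_eq_finrank (f := φ.toLinearMap) hfr).mp hinj
  exact ⟨AlgEquiv.ofBijective φ ⟨hinj, hsurj⟩⟩


/-- Let `ℓ` be an odd prime. Then the quaternion algebra `ℍ[ℚ_ℓ, −1, −1]` splits:
`ℍ[ℚ_ℓ, −1, −1] ≅ M₂(ℚ_ℓ)` as `ℚ_ℓ`-algebras. -/
theorem quaternionAlgebra_padic_hamilton_splits_odd (ℓ : ℕ) [Fact ℓ.Prime]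
    (hℓ : Odd ℓ) :
    Nonempty (ℍ[ℚ_[ℓ], -1, -1] ≃ₐ[ℚ_[ℓ]] Matrix (Fin 2) (Fin 2) ℚ_[ℓ]) := by
  obtain ⟨x, y, hxy⟩ : ∃ x y : ℚ_[ℓ], x ^ 2 + y ^ 2 = -1 := by
    obtain ⟨a, b, hab⟩ := ZMod.sq_add_sq ℓ (-1)
    rcases eq_or_ne a 0 with ha | ha
    · rcases eq_or_ne b 0 with hb | hb
      · exfalso
        rw [ha, hb] at hab
        simp at hab
      · exact padic_exists_sq_add_sq_aux ℓ hℓ b a hb (by linear_combination hab)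
    · exact padic_exists_sq_add_sq_aux ℓ hℓ a b ha hab
  exact split_of_sum_sq x y hxy
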